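/- Let κ be regular with 2^{<κ} = κ. Suppose F is a coherent (κ⁺, λ, κ)-forest of injective functions, closed under < κ modifications (to other injective functions). Then for every f ∈ F with dom(f) of size ≤ κ, the complement κ \ ran(f) has cardinality κ. -/

import Mathlib

open Cardinal Set
open scoped Classical

universe u v

namespace ForestPaper

variable {X : Type u} {μ : Type v}

/-- The domain of a partial function represented as an `Option`-valued function. -/
def pdom (f : X → Option μ) : Set X := {x | f x ≠ none}

/-- The range of a partial function. -/
def pran (f : X → Option μ) : Set μ := {y | ∃ x, f x = some y}

/-- `Ext g f` means the partial function `g` extends `f`. -/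
def Ext (g f : X → Option μ) : Prop := ∀ x, f x ≠ none → g x = f x

/-- Restriction of a partial function to a set. -/
noncomputable def pres (f : X → Option μ) (z : Set X) : X → Option μ :=
  fun x => if x ∈ z then f x else none

/-- The set of points of the common domain where `f` and `g` disagree. -/
def pdiff (f g : X → Option μ) : Set X :=
  {x | f x ≠ none ∧ g x ≠ none ∧ f x ≠ g x}

/-- `f` and `g` agree on their common domain. -/
def Agree (f g : X → Option μ) : Prop :=
  ∀ x, f x ≠ none → g x ≠ none → f x = g x

/-- Two members of `F` are compatible if they have a common extension in `F`. -/
def Compat (F : Set (X → Option μ)) (f g : X → Option μ) : Prop :=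
  ∃ h ∈ F, Ext h f ∧ Ext h g

/-- `A` is an antichain in `F`: a pairwise incompatible subset of `F`. -/
def IsAntichainIn (F A : Set (X → Option μ)) : Prop :=
  A ⊆ F ∧ ∀ f ∈ A, ∀ g ∈ A, f ≠ g → ¬ Compat F f g

/-- `A` is a maximal antichain in `F`. -/
def IsMaxAntichainIn (F A : Set (X → Option μ)) : Prop :=
  IsAntichainIn F A ∧ ∀ f ∈ F, ∃ g ∈ A, Compat F f g

/-- A `(c, X, μ)`-forest: a collection of partial functions from `X` to `μ` whose
domains are exactly the subsets of `X` of size `< c`, with coherent restrictions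
between levels (every restriction of a member is a member, and every member
extends to any larger admissible domain). -/
structure IsForest (c : Cardinal.{u}) (F : Set (X → Option μ)) : Prop where
  dom_small : ∀ f ∈ F, #(pdom f) < c
  exists_dom : ∀ z : Set X, #z < c → ∃ f ∈ F, pdom f = z
  restrict_mem : ∀ f ∈ F, ∀ z : Set X, z ⊆ pdom f → pres f z ∈ F
  extend_mem : ∀ f ∈ F, ∀ z : Set X, #z < c → pdom f ⊆ z →
    ∃ g ∈ F, pdom g = z ∧ Ext g f

/-- A family is `κ`-coherent when any two members disagree at `< κ` many points
of their common domain. -/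
def Coherent (κ : Cardinal.{u}) (F : Set (X → Option μ)) : Prop :=
  ∀ f ∈ F, ∀ g ∈ F, #(pdiff f g) < κ

/-- `F` is closed under modifications at `< κ` many points. -/
def ClosedMod (κ : Cardinal.{u}) (F : Set (X → Option μ)) : Prop :=
  ∀ f ∈ F, ∀ f' : X → Option μ, pdom f' = pdom f →
    #{x | f x ≠ f' x} < κ → f' ∈ F

/-- A partial function is injective (on its domain). -/
def PInj (f : X → Option μ) : Prop :=
  ∀ x y, f x ≠ none → f x = f y → x = y

/-- A partial function is `< κ`-to-1: every fiber has size `< κ`. -/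
def SmallTo1 (κ : Cardinal.{u}) (f : X → Option μ) : Prop :=
  ∀ y : μ, #{x | f x = some y} < κ

/-- `F` contains a `⊆`-well-ordered chain of order type `o`. -/
def HasChain (o : Ordinal.{u}) (F : Set (X → Option μ)) : Prop :=
  ∃ c : o.ToType → (X → Option μ), (∀ i, c i ∈ F) ∧
    ∀ i j, i < j → Ext (c j) (c i) ∧ c i ≠ c j

/-- For a coherent `(κ⁺,λ,κ)`-forest of injective functions, closed under `< κ`
modifications to injective functions, the complement of the range of any member
has cardinality `κ`. -/
theorem stmt16 {X : Type u} (κ : Cardinal.{u}) (hκ : κ.IsRegular)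
    (hpow : (2 : Cardinal.{u}) ^< κ = κ) (hX : Order.succ κ ≤ #X)
    (F : Set (X → Option κ.ord.ToType)) (hF : IsForest (Order.succ κ) F)
    (hcoh : Coherent κ F) (hinj : ∀ f ∈ F, PInj f)
    (hmod : ∀ f ∈ F, ∀ f' : X → Option κ.ord.ToType, PInj f' →
      pdom f' = pdom f → #{x | f x ≠ f' x} < κ → f' ∈ F)
    (f : X → Option κ.ord.ToType) (hf : f ∈ F) :
    #({y | y ∉ pran f} : Set κ.ord.ToType) = κ := by
  have hκκ : κ + κ = κ := Cardinal.add_eq_self hκ.aleph0_le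
  have hdom : #(pdom f) ≤ κ := Order.lt_succ_iff.mp (hF.dom_small f hf)
  -- the complement of the domain has size ≥ κ
  have hcompl : κ ≤ #((pdom f)ᶜ : Set X) := by
    by_contra h
    push_neg at h
    have h1 : #X ≤ κ := by
      calc #X = #(pdom f) + #((pdom f)ᶜ : Set X) := (Cardinal.mk_sum_compl _).symm
        _ ≤ κ + κ := add_le_add hdom h.le
        _ = κ := hκκ
    exact absurd (le_trans hX h1) (not_le.mpr (Order.lt_succ κ))
  obtain ⟨z, hzsub, hz⟩ : ∃ z ⊆ ((pdom f)ᶜ : Set X), #z = κ :=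
    Cardinal.le_mk_iff_exists_subset.mp hcompl
  have hzcard : #(pdom f ∪ z : Set X) < Order.succ κ := by
    refine lt_of_le_of_lt ((Cardinal.mk_union_le _ _).trans ?_) (Order.lt_succ κ)
    rw [hz]
    exact hκκ.le.trans' (add_le_add_left hdom κ)
  obtain ⟨g, hg, hgdom, hgext⟩ := hF.extend_mem f hf (pdom f ∪ z) hzcard
    Set.subset_union_left
  have hgz : ∀ x ∈ z, g x ≠ none := by
    intro x hx
    have : x ∈ pdom g := hgdom ▸ Set.mem_union_right _ hx
    exact this
  have hkey : ∀ x ∈ z, ∀ y, g x = some y → y ∉ pran f := by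
    rintro x hx y hxy ⟨x', hx'⟩
    have hfx' : f x' ≠ none := by rw [hx']; exact Option.some_ne_none _
    have hgx' : g x' = some y := by rw [hgext x' hfx', hx']
    have hxx' : x = x' := hinj g hg x x' (by rw [hxy]; exact Option.some_ne_none _)
      (by rw [hxy, hgx'])
    exact (hzsub hx) (by rw [hxx']; exact hfx')
  -- the injection from z into the complement of the range
  have hlow : κ ≤ #({y | y ∉ pran f} : Set κ.ord.ToType) := by
    have hsome : ∀ x : z, (g x).isSome := fun x =>
      Option.ne_none_iff_isSome.mp (hgz x x.2)
    have hinject : #(z : Set X) ≤ #({y | y ∉ pran f} : Set κ.ord.ToType) := by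
      refine Cardinal.mk_le_of_injective (f := fun x : z =>
        (⟨(g x).get (hsome x), hkey x x.2 _ (Option.some_get (hsome x)).symm⟩ :
          ({y | y ∉ pran f} : Set κ.ord.ToType))) ?_
      intro a b hab
      have hga : g a = g b := by
        rw [← Option.some_get (hsome a), ← Option.some_get (hsome b)]
        exact congrArg some (congrArg Subtype.val hab)
      exact Subtype.ext (hinj g hg a b (hgz a a.2) hga)
    rwa [hz] at hinject
  have hhigh : #({y | y ∉ pran f} : Set κ.ord.ToType) ≤ κ := by
    calc #({y | y ∉ pran f} : Set κ.ord.ToType) ≤ #κ.ord.ToType := Cardinal.mk_set_le _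
      _ = κ := Cardinal.mk_ord_toType κ
  exact le_antisymm hhigh hlow
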